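/- If a/b < c/d are consecutive elements of the n-th Farey sequence (in lowest terms), then bc − ad = 1. -/

import Mathlib

/-- The n-th Farey sequence: reduced fractions in [0,1] with denominator at most n. -/
def farey (n : ℕ) : Set ℚ := {q : ℚ | 0 ≤ q ∧ q ≤ 1 ∧ q.den ≤ n}

/-- For consecutive elements a/b < c/d of the n-th Farey sequence, bc - ad = 1. -/
theorem farey_consecutive (n : ℕ) (hn : 1 ≤ n) (q r : ℚ)
    (hq : q ∈ farey n) (hr : r ∈ farey n) (hlt : q < r)
    (hconsec : ∀ s ∈ farey n, ¬(q < s ∧ s < r)) :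
    (q.den : ℤ) * r.num - q.num * (r.den : ℤ) = 1 := by
  obtain ⟨hq0, hq1, hqd⟩ := hq
  obtain ⟨hr0, hr1, hrd⟩ := hr
  set a := q.num with ha
  set b := (q.den : ℤ) with hbdef
  have hb : 0 < b := Int.natCast_pos.mpr q.pos
  have hbn : b ≤ (n : ℤ) := Int.ofNat_le.mpr hqd
  -- Bezout: coprimality of num and den
  have hcop : IsCoprime a b := by
    rw [Int.isCoprime_iff_gcd_eq_one]
    exact q.reduced
  obtain ⟨u, v, huv⟩ := hcop
  -- choose t so that y = -u + b*t lies in (n - b, n]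
  obtain ⟨y, x, hyn, hylb, hkey⟩ :
      ∃ y x : ℤ, y ≤ (n : ℤ) ∧ (n : ℤ) - b < y ∧ b * x - a * y = 1 := by
    refine ⟨-u + b * (((n : ℤ) + u) / b), v + a * (((n : ℤ) + u) / b), ?_, ?_, ?_⟩
    · have hm0 : 0 ≤ ((n : ℤ) + u) % b := Int.emod_nonneg _ hb.ne'
      have hdm : b * (((n : ℤ) + u) / b) + ((n : ℤ) + u) % b = (n : ℤ) + u :=
        Int.mul_ediv_add_emod _ _
      linarith
    · have hmb : ((n : ℤ) + u) % b < b := Int.emod_lt_of_pos _ hb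
      have hdm : b * (((n : ℤ) + u) / b) + ((n : ℤ) + u) % b = (n : ℤ) + u :=
        Int.mul_ediv_add_emod _ _
      linarith
    · linear_combination huv
  have hy1 : 1 ≤ y := by linarith
  -- construct the rational s = x / y
  have hcopxy : Int.gcd x y = 1 := Int.isCoprime_iff_gcd_eq_one.mp ⟨b, -a, by linarith⟩
  have hynat : (y.toNat : ℤ) = y := Int.toNat_of_nonneg (by linarith)
  set s : ℚ := ⟨x, y.toNat, by omega, by
    have : y.natAbs = y.toNat := by omega
    simpa [Int.gcd, this] using hcopxy⟩ with hsdef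
  have hsnum : s.num = x := rfl
  have hsden : (s.den : ℤ) = y := hynat
  have hqs : q < s := by
    rw [Rat.lt_iff, hsnum, hsden]
    linarith
  -- main lemma: every Farey element above q is at least s
  have hmain : ∀ s' ∈ farey n, q < s' → s ≤ s' := by
    rintro s' ⟨_, _, hs'd⟩ hqs'
    by_contra hlt'
    push_neg at hlt'
    rw [Rat.lt_iff] at hqs' hlt'
    rw [hsnum, hsden] at hlt'
    have hd : (s'.den : ℤ) ≤ (n : ℤ) := Int.ofNat_le.mpr hs'd
    have hd0 : 0 < (s'.den : ℤ) := Int.natCast_pos.mpr s'.pos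
    have h1 : 1 ≤ s'.num * b - a * (s'.den : ℤ) := by linarith
    have h2 : 1 ≤ x * (s'.den : ℤ) - s'.num * y := by linarith
    have hid : (s'.den : ℤ) =
        y * (s'.num * b - a * (s'.den : ℤ)) + b * (x * (s'.den : ℤ) - s'.num * y) := by
      linear_combination (-(s'.den : ℤ)) * hkey
    nlinarith [mul_le_mul_of_nonneg_left h1 (by linarith : (0:ℤ) ≤ y),
      mul_le_mul_of_nonneg_left h2 (by linarith : (0:ℤ) ≤ b)]
  have hsr : s ≤ r := hmain r ⟨hr0, hr1, hrd⟩ hlt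
  have hsf : s ∈ farey n := ⟨le_of_lt (lt_of_le_of_lt hq0 hqs), le_trans hsr hr1, by omega⟩
  have hrs : r ≤ s := not_lt.mp (fun h => hconsec s hsf ⟨hqs, h⟩)
  have hrseq : r = s := le_antisymm hrs hsr
  rw [hrseq, hsnum, hsden]
  exact hkey
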